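/- Let G be a finite simple digraph on n vertices with independence number at most α ≥ 1. Then there exists a single vertex v of G whose in-degree and out-degree are both at least (n − 2α)/(4α). -/

import Mathlib

variable {V : Type*}

def IsDicycle (A : V → V → Prop) : List V → Prop
  | [] => False
  | v :: l => (v :: l).Nodup ∧ List.Chain A v (l ++ [v])

def IsTournament (A : V → V → Prop) : Prop :=
  (∀ v, ¬ A v v) ∧ ∀ u v : V, u ≠ v → (A u v ↔ ¬ A v u)

def IndepNumLE (A : V → V → Prop) (α : ℕ) : Prop :=
  ∀ I : Finset V, (∀ u ∈ I, ∀ v ∈ I, u ≠ v → ¬ A u v) → I.card ≤ α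

noncomputable def outDeg (A : V → V → Prop) (v : V) : ℕ := {u | A v u}.ncard

noncomputable def inDeg (A : V → V → Prop) (v : V) : ℕ := {u | A u v}.ncard

def restrictRel (A : V → V → Prop) (S : Set V) : V → V → Prop :=
  fun u v => u ∈ S ∧ v ∈ S ∧ A u v

def cycleArcs : List V → List (V × V)
  | [] => []
  | v :: l => List.zip (v :: l) (l ++ [v])

def IsInducedDicycle (A : V → V → Prop) (l : List V) : Prop :=
  IsDicycle A l ∧ ∀ u ∈ l, ∀ v ∈ l, A u v → (u, v) ∈ cycleArcs l

def IsFVS (A : V → V → Prop) (F : Set V) : Prop :=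
  ∀ l, IsDicycle A l → ∃ v ∈ l, v ∈ F

def reachSet (A : V → V → Prop) (x : V) : Set V :=
  {y | y ≠ x ∧ Relation.TransGen A x y}

def HitsCyclesThrough (A : V → V → Prop) (S F : Set V) : Prop :=
  ∀ l, IsDicycle A l → (∃ v ∈ l, v ∈ S) → ∃ v ∈ l, v ∈ F

open scoped Classical
private lemma arcsBound (A : V → V → Prop) (α : ℕ) (hind : IndepNumLE A α) :
    ∀ n (S : Finset V), S.card ≤ n →
      S.card * S.card ≤ S.card * α +
        2 * α * ((S ×ˢ S).filter (fun p => p.1 ≠ p.2 ∧ A p.1 p.2)).card := by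
  intro n
  induction n with
  | zero => intro S hS; simp [Finset.card_eq_zero.mp (Nat.le_zero.mp hS)]
  | succ n ih =>
    intro S hS
    rcases S.eq_empty_or_nonempty with rfl | hne
    · simp
    -- pick a maximum-cardinality independent subset I of S
    set T : Finset (Finset V) :=
      S.powerset.filter (fun I => ∀ u ∈ I, ∀ v ∈ I, u ≠ v → ¬ A u v) with hT
    have hTne : T.Nonempty := ⟨∅, by simp [hT]⟩
    obtain ⟨I, hIT, hImax⟩ := T.exists_max_image Finset.card hTne
    rw [hT, Finset.mem_filter, Finset.mem_powerset] at hIT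
    obtain ⟨hIS, hIind⟩ := hIT
    have hkα : I.card ≤ α := hind I hIind
    obtain ⟨x, hx⟩ := hne
    have hk1 : 1 ≤ I.card := by
      have : ({x} : Finset V) ∈ T := by
        simp [hT, Finset.singleton_subset_iff, hx]
      simpa using hImax _ this
    -- every vertex outside I has an arc to or from I
    have hadj : ∀ u ∈ S \ I, ∃ w ∈ I, A u w ∨ A w u := by
      intro u hu
      rw [Finset.mem_sdiff] at hu
      by_contra hcon
      push_neg at hcon
      have hins : insert u I ∈ T := by
        rw [hT, Finset.mem_filter, Finset.mem_powerset]
        refine ⟨Finset.insert_subset hu.1 hIS, ?_⟩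
        intro a ha b hb hab
        rcases Finset.mem_insert.mp ha with ha1 | ha1 <;>
          rcases Finset.mem_insert.mp hb with hb1 | hb1
        · exact absurd (ha1.trans hb1.symm) hab
        · subst ha1; exact (hcon b hb1).1
        · subst hb1; exact (hcon a ha1).2
        · exact hIind a ha1 b hb1 hab
      have := hImax _ hins
      rw [Finset.card_insert_of_notMem hu.2] at this
      omega
    set arcs := fun (X : Finset V) =>
      (X ×ˢ X).filter (fun p => p.1 ≠ p.2 ∧ A p.1 p.2) with harcs
    -- injective map from S \ I into arcs S touching I
    choose w hwI hwA using hadj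
    set f : V → V × V := fun u =>
      if h : u ∈ S \ I then
        (if A u (w u h) then (u, w u h) else (w u h, u)) else (u, u) with hf
    set B := (arcs S).filter (fun p => p.1 ∈ I ∨ p.2 ∈ I) with hB
    have hcardB : (S \ I).card ≤ B.card := by
      apply Finset.card_le_card_of_injOn f
      · intro u hu
        rw [Finset.mem_coe] at hu
        have huS : u ∈ S := (Finset.mem_sdiff.mp hu).1
        have huI : u ∉ I := (Finset.mem_sdiff.mp hu).2
        have hwS : w u hu ∈ S := hIS (hwI u hu)
        have hne' : u ≠ w u hu := fun h => huI (h ▸ hwI u hu)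
        rw [Finset.mem_coe, hB, Finset.mem_filter, harcs]
        simp only [hf, dif_pos hu]
        rcases hwA u hu with h1 | h1
        · rw [if_pos h1]
          exact ⟨Finset.mem_filter.mpr ⟨Finset.mem_product.mpr ⟨huS, hwS⟩, hne', h1⟩,
            Or.inr (hwI u hu)⟩
        · have h2 : ¬ A u (w u hu) ∨ A u (w u hu) := em' _
          by_cases h3 : A u (w u hu)
          · rw [if_pos h3]
            exact ⟨Finset.mem_filter.mpr ⟨Finset.mem_product.mpr ⟨huS, hwS⟩, hne', h3⟩,
              Or.inr (hwI u hu)⟩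
          · rw [if_neg h3]
            exact ⟨Finset.mem_filter.mpr ⟨Finset.mem_product.mpr ⟨hwS, huS⟩,
              fun h => hne' h.symm, h1⟩, Or.inl (hwI u hu)⟩
      · intro a ha b hb hab
        have ha' : a ∈ S \ I := Finset.mem_coe.mp ha
        have hb' : b ∈ S \ I := Finset.mem_coe.mp hb
        have haI : a ∉ I := (Finset.mem_sdiff.mp ha').2
        have hbI : b ∉ I := (Finset.mem_sdiff.mp hb').2
        simp only [hf, dif_pos ha', dif_pos hb'] at hab
        split_ifs at hab with h1 h2 h2 <;>
          rw [Prod.mk.injEq] at hab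
        · exact hab.1
        · exact absurd (by rw [hab.1]; exact hwI b hb') haI
        · exact absurd (by rw [hab.2]; exact hwI b hb') haI
        · exact hab.2
    -- arcs of S \ I are disjoint from B
    have hsub : B ∪ arcs (S \ I) ⊆ arcs S := by
      apply Finset.union_subset (Finset.filter_subset _ _)
      rw [harcs]
      intro p hp
      rw [Finset.mem_filter, Finset.mem_product] at hp ⊢
      exact ⟨⟨(Finset.mem_sdiff.mp hp.1.1).1, (Finset.mem_sdiff.mp hp.1.2).1⟩, hp.2⟩
    have hdisj : Disjoint B (arcs (S \ I)) := by
      rw [Finset.disjoint_left]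
      intro p hp hp'
      rw [hB, Finset.mem_filter] at hp
      rw [harcs, Finset.mem_filter, Finset.mem_product] at hp'
      rcases hp.2 with h | h
      · exact (Finset.mem_sdiff.mp hp'.1.1).2 h
      · exact (Finset.mem_sdiff.mp hp'.1.2).2 h
    have hsplit : B.card + (arcs (S \ I)).card ≤ (arcs S).card := by
      rw [← Finset.card_union_of_disjoint hdisj]
      exact Finset.card_le_card hsub
    have hcardSI : (S \ I).card = S.card - I.card := Finset.card_sdiff_of_subset hIS
    have hkm : I.card ≤ S.card := Finset.card_le_card hIS
    have hIH := ih (S \ I) (by omega)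
    have e1 : (Finset.filter (fun p => p.1 ≠ p.2 ∧ A p.1 p.2) (S ×ˢ S)) = arcs S := rfl
    have e2 : (Finset.filter (fun p => p.1 ≠ p.2 ∧ A p.1 p.2) ((S \ I) ×ˢ (S \ I)))
        = arcs (S \ I) := rfl
    rw [e1]
    rw [e2] at hIH
    obtain ⟨j, hj⟩ : ∃ j, S.card = I.card + j := ⟨S.card - I.card, by omega⟩
    have hj' : (S \ I).card = j := by omega
    rw [hj'] at hIH hcardB
    rw [hj]
    nlinarith [hIH, hsplit, hcardB, hkα, hk1]

private lemma keyLem [Fintype V] (A : V → V → Prop) (α : ℕ) (hind : IndepNumLE A α)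
    (S : Finset V) (hS : S.Nonempty) :
    ∃ v ∈ S, S.card ≤ α + 2 * α * (S.filter (fun u => u ≠ v ∧ A u v)).card := by
  have hb := arcsBound A α hind S.card S le_rfl
  have hfib : ((S ×ˢ S).filter (fun p => p.1 ≠ p.2 ∧ A p.1 p.2)).card
      = ∑ v ∈ S, (S.filter (fun u => u ≠ v ∧ A u v)).card := by
    rw [Finset.card_eq_sum_card_fiberwise
      (f := Prod.snd) (t := S)
      (fun p hp => (Finset.mem_product.mp (Finset.mem_filter.mp hp).1).2)]
    apply Finset.sum_congr rfl
    intro v hv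
    refine Finset.card_bij' (fun p _ => p.1) (fun u _ => (u, v)) ?_ ?_ ?_ ?_
    case _ =>
      intro p hp
      rw [Finset.mem_filter] at hp
      obtain ⟨hp1, hp2⟩ := hp
      rw [Finset.mem_filter, Finset.mem_product] at hp1
      rw [Finset.mem_filter]
      subst hp2
      exact ⟨hp1.1.1, hp1.2⟩
    case _ =>
      intro u hu
      rw [Finset.mem_filter] at hu
      exact Finset.mem_filter.mpr
        ⟨Finset.mem_filter.mpr ⟨Finset.mem_product.mpr ⟨hu.1, hv⟩, hu.2⟩, rfl⟩
    case _ =>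
      intro p hp
      have h2 : p.2 = v := (Finset.mem_filter.mp hp).2
      exact Prod.ext rfl h2.symm
    case _ => intro u hu; rfl
  rw [hfib] at hb
  have hsum : ∑ v ∈ S, S.card ≤ ∑ v ∈ S, (α + 2 * α * (S.filter (fun u => u ≠ v ∧ A u v)).card) := by
    rw [Finset.sum_const, Finset.sum_add_distrib, Finset.sum_const, ← Finset.mul_sum]
    simpa [smul_eq_mul, mul_comm] using hb
  exact Finset.exists_le_of_sum_le hS hsum

private lemma degGe [Fintype V] (A : V → V → Prop) (v : V) (S : Finset V) :
    (S.filter (fun u => u ≠ v ∧ A u v)).card ≤ inDeg A v := by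
  rw [inDeg, ← Set.ncard_coe_finset]
  apply Set.ncard_le_ncard _ (Set.toFinite _)
  intro u hu
  simp only [Finset.coe_filter, Set.mem_setOf_eq] at hu
  exact hu.2.2

/-- A digraph with independence number at most α has a vertex whose in-degree and
out-degree are both at least (n-2α)/(4α). -/
theorem stmt3 [Fintype V] [Nonempty V] (A : V → V → Prop) (α : ℕ) (hα : 1 ≤ α)
    (hind : IndepNumLE A α) :
    ∃ v : V, ((Fintype.card V : ℚ) - 2 * α) / (4 * α) ≤ inDeg A v ∧
      ((Fintype.card V : ℚ) - 2 * α) / (4 * α) ≤ outDeg A v := by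
  have hα4 : (0 : ℚ) < 4 * α := by
    have : (1 : ℚ) ≤ α := by exact_mod_cast hα
    linarith
  set n := Fintype.card V with hn
  set P := Finset.univ.filter (fun v => inDeg A v ≤ outDeg A v) with hP
  set Q := Finset.univ.filter (fun v => ¬ inDeg A v ≤ outDeg A v) with hQ
  have hPQ : P.card + Q.card = n := by
    rw [hP, hQ, Finset.card_filter_add_card_filter_not, Finset.card_univ]
  have hn1 : 1 ≤ n := Fintype.card_pos
  rcases le_or_gt n (2 * P.card) with hcase | hcase
  · -- the side where out-degree ≥ in-degree is large
    have hPne : P.Nonempty := Finset.card_pos.mp (by omega)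
    obtain ⟨v, hvP, hv⟩ := keyLem A α hind P hPne
    have hdeg : (P.filter (fun u => u ≠ v ∧ A u v)).card ≤ inDeg A v := degGe A v P
    have hvio : inDeg A v ≤ outDeg A v := (Finset.mem_filter.mp hvP).2
    have hkeyN : n ≤ 2 * α + 4 * α * inDeg A v := by
      have h1 : 4 * α * (P.filter (fun u => u ≠ v ∧ A u v)).card ≤ 4 * α * inDeg A v :=
        Nat.mul_le_mul_left _ hdeg
      nlinarith [hv, hcase, h1]
    have hkey : (n : ℚ) ≤ 2 * α + 4 * α * inDeg A v := by exact_mod_cast hkeyN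
    have hio : (inDeg A v : ℚ) ≤ outDeg A v := by exact_mod_cast hvio
    refine ⟨v, ?_, ?_⟩ <;> rw [div_le_iff₀ hα4] <;> nlinarith [hkey, hio]
  · -- the side where in-degree > out-degree is large
    have hQbig : n ≤ 2 * Q.card := by omega
    have hQne : Q.Nonempty := Finset.card_pos.mp (by omega)
    have hind' : IndepNumLE (fun u v => A v u) α := by
      intro I hI
      exact hind I (fun u hu v hv huv => hI v hv u hu huv.symm)
    obtain ⟨v, hvQ, hv⟩ := keyLem (fun u v => A v u) α hind' Q hQne
    have hdeg : (Q.filter (fun u => u ≠ v ∧ A v u)).card ≤ outDeg A v :=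
      degGe (fun u v => A v u) v Q
    have hvio : outDeg A v < inDeg A v :=
      Nat.lt_of_not_le (fun h => (Finset.mem_filter.mp hvQ).2 h)
    have hkeyN : n ≤ 2 * α + 4 * α * outDeg A v := by
      have h1 : 4 * α * (Q.filter (fun u => u ≠ v ∧ A v u)).card ≤ 4 * α * outDeg A v :=
        Nat.mul_le_mul_left _ hdeg
      nlinarith [hv, hQbig, h1]
    have hkey : (n : ℚ) ≤ 2 * α + 4 * α * outDeg A v := by exact_mod_cast hkeyN
    have hio : (outDeg A v : ℚ) ≤ inDeg A v := by
      exact_mod_cast Nat.le_of_lt hvio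
    refine ⟨v, ?_, ?_⟩ <;> rw [div_le_iff₀ hα4] <;> nlinarith [hkey, hio]
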